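/- A set S ⊆ V(G) is an ℓ-leaky forcing set of G if and only if S intersects every ℓ-leaky fort of G. -/
import Mathlib


open SimpleGraph

namespace LF

variable {V : Type*}

/-- Vertices eventually forced blue, starting from `S`, with leak set `L`:
a blue vertex not in `L` whose every neighbor other than `w` is blue forces `w`. -/
inductive Forced (G : SimpleGraph V) (L S : Set V) : V → Prop
  | init (v : V) (hv : v ∈ S) : Forced G L S v
  | force (b w : V) (hb : Forced G L S b) (hbL : b ∉ L) (hadj : G.Adj b w)
      (hall : ∀ u, G.Adj b u → u ≠ w → Forced G L S u) : Forced G L S w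

/-- `S` is an ℓ-leaky forcing set of `G`. -/
def IsLeakyForcingSet (G : SimpleGraph V) (ℓ : ℕ) (S : Set V) : Prop :=
  ∀ L : Set V, L.ncard ≤ ℓ → ∀ v, Forced G L S v

/-- The ℓ-leaky forcing number `Z_{(ℓ)}(G)`. -/
noncomputable def leakyForcingNumber (G : SimpleGraph V) [Fintype V] (ℓ : ℕ) : ℕ :=
  sInf {k | ∃ S : Finset V, S.card = k ∧ IsLeakyForcingSet G ℓ ↑S}

/-- An ℓ-leaky fort: a nonempty set `F` such that at most ℓ vertices outside `F`
have exactly one neighbor in `F`. -/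
def IsLeakyFort (G : SimpleGraph V) (ℓ : ℕ) (F : Set V) : Prop :=
  F.Nonempty ∧ {v | v ∉ F ∧ ∃! u, u ∈ F ∧ G.Adj v u}.ncard ≤ ℓ

/-- The path graph on `n` vertices. -/
def pathGraph (n : ℕ) : SimpleGraph (Fin n) :=
  SimpleGraph.fromRel (fun i j => i.val + 1 = j.val)

/-- The cycle graph on `n` vertices. -/
def cycleGraph (n : ℕ) : SimpleGraph (Fin n) :=
  SimpleGraph.fromRel (fun i j => (i.val + 1) % n = j.val)

/-- The star graph on `n` vertices, with center `0`. -/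
def starGraph (n : ℕ) : SimpleGraph (Fin n) :=
  SimpleGraph.fromRel (fun i _ => i.val = 0)

/-- The generalized Petersen graph `P(n,k)`: `Sum.inl i` is the inner vertex `x_{i+1}`,
`Sum.inr i` is the outer vertex `y_{i+1}` (0-indexed). -/
def petersen (n k : ℕ) : SimpleGraph (Fin n ⊕ Fin n) :=
  SimpleGraph.fromRel (fun a b =>
    match a, b with
    | Sum.inr i, Sum.inr j => (i.val + 1) % n = j.val
    | Sum.inl i, Sum.inr j => i = j
    | Sum.inl i, Sum.inl j => (i.val + k) % n = j.val
    | _, _ => False)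

end LF

theorem stmt2 {V : Type*} [Fintype V] (G : SimpleGraph V) (ℓ : ℕ) (S : Set V) :
    LF.IsLeakyForcingSet G ℓ S ↔
      ∀ F : Set V, LF.IsLeakyFort G ℓ F → (S ∩ F).Nonempty := by
  constructor
  · rintro hS F ⟨⟨f, hf⟩, hF⟩
    by_contra hne
    rw [Set.not_nonempty_iff_eq_empty] at hne
    set L := {v | v ∉ F ∧ ∃! u, u ∈ F ∧ G.Adj v u} with hL
    have key : ∀ v, LF.Forced G L S v → v ∉ F := by
      intro v hv
      induction hv with
      | init v hv =>
        intro hvF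
        have : v ∈ S ∩ F := ⟨hv, hvF⟩
        simp [hne] at this
      | force b w hb hbL hadj hall ih ihall =>
        intro hwF
        have hnu : ¬ ∃! u, u ∈ F ∧ G.Adj b u := fun h => hbL ⟨ih, h⟩
        have : ∃ y, (y ∈ F ∧ G.Adj b y) ∧ y ≠ w := by
          by_contra hc
          push_neg at hc
          exact hnu ⟨w, ⟨hwF, hadj⟩, fun y hy => hc y hy⟩
        obtain ⟨y, ⟨hyF, hyadj⟩, hyw⟩ := this
        exact ihall y hyadj hyw hyF
    exact key f (hS L hF f) hf
  · intro h L hL v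
    by_contra hv
    set F := {v | ¬ LF.Forced G L S v} with hFdef
    have hfort : LF.IsLeakyFort G ℓ F := by
      refine ⟨⟨v, hv⟩, ?_⟩
      have hsub : {w | w ∉ F ∧ ∃! u, u ∈ F ∧ G.Adj w u} ⊆ L := by
        rintro w ⟨hwF, u, ⟨huF, hadj⟩, huniq⟩
        by_contra hwL
        simp only [hFdef, Set.mem_setOf_eq, not_not] at hwF
        refine huF (LF.Forced.force w u hwF hwL hadj (fun x hx hxu => ?_))
        by_contra hxF
        exact hxu (huniq x ⟨hxF, hx⟩)
      exact le_trans (Set.ncard_le_ncard hsub L.toFinite) hL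
    obtain ⟨s, hsS, hsF⟩ := h F hfort
    exact hsF (LF.Forced.init s hsS)
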